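/- The function v ↦ -β⁻¹ log Tr(e^{-β(H₀ + V(v))}) is strictly concave on the space of traceless Hermitian matrices v, where V(v) is the linear map embedding a one-body potential v into the N-particle Hamiltonian (any injective-up-to-constants linear map from Hermitian matrices to Hermitian operators), assuming distinct traceless v₁ ≠ v₂ give Gibbs states that are distinct. -/

import Mathlib

open Matrix BigOperators
open scoped ComplexOrder

/-- Von Neumann entropy `S(ρ) = -Tr(ρ log ρ)`, defined spectrally with `0 log 0 = 0`. -/
noncomputable def vnEntropy {n : Type*} [Fintype n] [DecidableEq n]
    (ρ : Matrix n n ℂ) : ℝ :=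
  if h : ρ.IsHermitian then -∑ i, h.eigenvalues i * Real.log (h.eigenvalues i) else 0

/-- A density matrix: Hermitian positive semidefinite with unit trace. -/
def IsDensityMatrix {n : Type*} [Fintype n] [DecidableEq n] (ρ : Matrix n n ℂ) : Prop :=
  ρ.PosSemidef ∧ ρ.trace = 1

/-- The Helmholtz functional `Ω(ρ) = Tr(ρH) + β⁻¹ Tr(ρ log ρ) = Tr(ρH) - β⁻¹ S(ρ)`. -/
noncomputable def helmholtz {n : Type*} [Fintype n] [DecidableEq n]
    (H : Matrix n n ℂ) (β : ℝ) (ρ : Matrix n n ℂ) : ℝ :=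
  ((ρ * H).trace).re - β⁻¹ * vnEntropy ρ

/-- The Gibbs state `e^{-βH} / Tr(e^{-βH})`. -/
noncomputable def gibbs {n : Type*} [Fintype n] [DecidableEq n]
    (β : ℝ) (H : Matrix n n ℂ) : Matrix n n ℂ :=
  ((NormedSpace.exp ((-β : ℂ) • H)).trace)⁻¹ • NormedSpace.exp ((-β : ℂ) • H)

/-- The free energy `-β⁻¹ log Tr(e^{-βH})`. -/
noncomputable def freeEnergy {n : Type*} [Fintype n] [DecidableEq n]
    (β : ℝ) (H : Matrix n n ℂ) : ℝ :=
  -β⁻¹ * Real.log (((NormedSpace.exp ((-β : ℂ) • H)).trace).re)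

namespace FEaux

variable {n : Type*} [Fintype n] [DecidableEq n]

/-- exp commutes with conjugation by a unitary matrix. -/
lemma unitary_conj_exp (U : Matrix.unitaryGroup n ℂ) (D : Matrix n n ℂ) :
    NormedSpace.exp ((U : Matrix n n ℂ) * D * star (U : Matrix n n ℂ))
      = (U : Matrix n n ℂ) * NormedSpace.exp D * star (U : Matrix n n ℂ) := by
  have h1 : (U : Matrix n n ℂ) * star (U : Matrix n n ℂ) = 1 :=
    Unitary.mul_star_self_of_mem U.2
  have hU : IsUnit (U : Matrix n n ℂ) := by
    rw [Matrix.isUnit_iff_isUnit_det]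
    exact IsUnit.of_mul_eq_one _ (by rw [← Matrix.det_mul, h1, Matrix.det_one])
  have hinv : (U : Matrix n n ℂ)⁻¹ = star (U : Matrix n n ℂ) :=
    Matrix.inv_eq_right_inv h1
  rw [← hinv, Matrix.exp_conj _ _ hU, hinv]

/-- Spectral form of the exponential of a Hermitian matrix. -/
lemma exp_hermitian {A : Matrix n n ℂ} (hA : A.IsHermitian) :
    NormedSpace.exp A = (hA.eigenvectorUnitary : Matrix n n ℂ) *
      Matrix.diagonal (fun i => ((Real.exp (hA.eigenvalues i) : ℝ) : ℂ)) *
      star (hA.eigenvectorUnitary : Matrix n n ℂ) := by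
  conv_lhs => rw [hA.spectral_theorem, Unitary.conjStarAlgAut_apply]
  rw [unitary_conj_exp, Matrix.exp_diagonal]
  congr 2
  funext i
  simp [Pi.exp_def, Function.comp, ← Complex.exp_eq_exp_ℂ, ← Complex.ofReal_exp]

lemma trace_exp_hermitian {A : Matrix n n ℂ} (hA : A.IsHermitian) :
    (NormedSpace.exp A).trace = ((∑ i, Real.exp (hA.eigenvalues i) : ℝ) : ℂ) := by
  rw [exp_hermitian hA, Matrix.trace_mul_cycle,
    Unitary.star_mul_self_of_mem (hA.eigenvectorUnitary).2, Matrix.one_mul,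
    Matrix.trace_diagonal]
  push_cast
  rfl

lemma charpoly_diagonal (v : n → ℂ) :
    (Matrix.diagonal v).charpoly = ∏ i, (Polynomial.X - Polynomial.C (v i)) := by
  have h : Matrix.charmatrix (Matrix.diagonal v)
      = Matrix.diagonal (fun i => (Polynomial.X - Polynomial.C (v i))) := by
    ext i j
    by_cases hij : i = j
    · subst hij; simp [Matrix.charmatrix_apply_eq]
    · simp [Matrix.charmatrix_apply_ne _ _ _ hij, Matrix.diagonal_apply_ne _ hij]
  rw [Matrix.charpoly, h, Matrix.det_diagonal]

lemma charpoly_unitary_conj (U : Matrix.unitaryGroup n ℂ) (B : Matrix n n ℂ) :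
    ((U : Matrix n n ℂ) * B * star (U : Matrix n n ℂ)).charpoly = B.charpoly := by
  have h1 : (U : Matrix n n ℂ) * star (U : Matrix n n ℂ) = 1 :=
    Unitary.mul_star_self_of_mem U.2
  set Um : Matrix n n (Polynomial ℂ) := (U : Matrix n n ℂ).map Polynomial.C with hUm
  set sUm : Matrix n n (Polynomial ℂ) := (star (U : Matrix n n ℂ)).map Polynomial.C with hsUm
  have hprod : Um * sUm = 1 := by
    rw [hUm, hsUm, ← Matrix.map_mul, h1]
    simp
  have hchar : Matrix.charmatrix ((U : Matrix n n ℂ) * B * star (U : Matrix n n ℂ))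
      = Um * Matrix.charmatrix B * sUm := by
    rw [charmatrix, charmatrix]
    rw [Matrix.mul_sub, Matrix.sub_mul]
    congr 1
    · have hcomm : Um * Matrix.scalar n (Polynomial.X : Polynomial ℂ)
          = Matrix.scalar n (Polynomial.X : Polynomial ℂ) * Um := by
        ext i j
        simp [Matrix.scalar_apply, Matrix.mul_diagonal, Matrix.diagonal_mul, mul_comm]
      rw [hcomm, Matrix.mul_assoc, hprod, Matrix.mul_one]
    · show _ = Um * ((RingHom.mapMatrix (Polynomial.C : ℂ →+* Polynomial ℂ)) B) * sUm
      simp only [RingHom.mapMatrix_apply, hUm, hsUm, ← Matrix.map_mul]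
  rw [Matrix.charpoly, Matrix.charpoly, hchar, Matrix.det_mul, Matrix.det_mul]
  have hdet : Um.det * sUm.det = 1 := by rw [← Matrix.det_mul, hprod, Matrix.det_one]
  calc Um.det * (Matrix.charmatrix B).det * sUm.det
      = (Um.det * sUm.det) * (Matrix.charmatrix B).det := by ring
    _ = (Matrix.charmatrix B).det := by rw [hdet, one_mul]

/-- The eigenvalues of `U D U*` are the diagonal entries of `D`, as multisets. -/
lemma eigenvalues_multiset {U : Matrix.unitaryGroup n ℂ} {f : n → ℝ}
    {B : Matrix n n ℂ} (hB : B.IsHermitian)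
    (hBdef : B = (U : Matrix n n ℂ) * Matrix.diagonal (fun i => ((f i : ℝ) : ℂ))
      * star (U : Matrix n n ℂ)) :
    Finset.univ.val.map hB.eigenvalues = Finset.univ.val.map f := by
  have h1 : B.charpoly = ∏ i, (Polynomial.X - Polynomial.C ((f i : ℂ))) := by
    rw [hBdef, charpoly_unitary_conj, charpoly_diagonal]
  have h2 : B.charpoly = ∏ i, (Polynomial.X - Polynomial.C ((hB.eigenvalues i : ℂ))) := by
    conv_lhs => rw [hB.spectral_theorem, Unitary.conjStarAlgAut_apply]
    rw [charpoly_unitary_conj, charpoly_diagonal]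
    rfl
  have key : (Finset.univ.val.map (fun i => ((hB.eigenvalues i : ℂ))))
      = (Finset.univ.val.map (fun i => ((f i : ℂ)))) := by
    have e1 : ∀ g : n → ℂ, (∏ i, (Polynomial.X - Polynomial.C (g i))).roots
        = Finset.univ.val.map g := by
      intro g
      have h := Polynomial.roots_multiset_prod_X_sub_C (Finset.univ.val.map g)
      rw [Multiset.map_map] at h
      rw [Finset.prod_eq_multiset_prod]
      exact h
    have := congrArg Polynomial.roots (h2.symm.trans h1)
    rwa [e1, e1] at this
  have : (Finset.univ.val.map hB.eigenvalues).map (fun x : ℝ => (x : ℂ))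
      = (Finset.univ.val.map f).map (fun x : ℝ => (x : ℂ)) := by
    rw [Multiset.map_map, Multiset.map_map]
    exact key
  exact Multiset.map_injective (fun a b => by exact_mod_cast id) this

lemma sum_phi_eigenvalues {U : Matrix.unitaryGroup n ℂ} {f : n → ℝ}
    {B : Matrix n n ℂ} (hB : B.IsHermitian)
    (hBdef : B = (U : Matrix n n ℂ) * Matrix.diagonal (fun i => ((f i : ℝ) : ℂ))
      * star (U : Matrix n n ℂ)) (φ : ℝ → ℝ) :
    ∑ i, φ (hB.eigenvalues i) = ∑ i, φ (f i) := by
  have h := eigenvalues_multiset hB hBdef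
  calc ∑ i, φ (hB.eigenvalues i) = ((Finset.univ.val.map hB.eigenvalues).map φ).sum := by
        rw [Multiset.map_map]; rfl
    _ = ((Finset.univ.val.map f).map φ).sum := by rw [h]
    _ = ∑ i, φ (f i) := by rw [Multiset.map_map]; rfl

lemma klein_pointwise {p q : ℝ} (hp : 0 ≤ p) (hq : 0 < q) :
    0 ≤ p * Real.log p - p * Real.log q - p + q ∧
      (p ≠ q → 0 < p * Real.log p - p * Real.log q - p + q) := by
  rcases eq_or_lt_of_le hp with h0 | hp'
  · rw [← h0]
    simp only [zero_mul, zero_sub, neg_zero, zero_add, sub_zero]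
    exact ⟨hq.le, fun _ => hq⟩
  · have hd : 0 < q / p := div_pos hq hp'
    have hlog : Real.log (q / p) ≤ q / p - 1 := Real.log_le_sub_one_of_pos hd
    have e1 : p * Real.log (q / p) = p * Real.log q - p * Real.log p := by
      rw [Real.log_div hq.ne' hp'.ne']; ring
    have e2 : p * (q / p - 1) = q - p := by field_simp
    have key : p * Real.log (q / p) ≤ p * (q / p - 1) :=
      mul_le_mul_of_nonneg_left hlog hp'.le
    constructor
    · rw [e1, e2] at key; linarith
    · intro hne
      have hne1 : q / p ≠ 1 := by
        intro h
        exact hne ((div_eq_one_iff_eq hp'.ne').mp h).symm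
      have hlog' : Real.log (q / p) < q / p - 1 := Real.log_lt_sub_one_of_pos hd hne1
      have key' : p * Real.log (q / p) < p * (q / p - 1) :=
        mul_lt_mul_of_pos_left hlog' hp'
      rw [e1, e2] at key'; linarith

/-- trace is invariant under unitary conjugation -/
lemma trace_conj {P : Matrix n n ℂ} (h : star P * P = 1) (X : Matrix n n ℂ) :
    (P * X * star P).trace = X.trace := by
  rw [Matrix.trace_mul_cycle, h, Matrix.one_mul]

/-- the normalized matrix exponential in spectral form -/
lemma normalized_exp_eq {A : Matrix n n ℂ} (hA : A.IsHermitian) :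
    ((NormedSpace.exp A).trace)⁻¹ • NormedSpace.exp A
      = (hA.eigenvectorUnitary : Matrix n n ℂ)
        * Matrix.diagonal (fun j =>
            ((Real.exp (hA.eigenvalues j) / (∑ i, Real.exp (hA.eigenvalues i)) : ℝ) : ℂ))
        * star (hA.eigenvectorUnitary : Matrix n n ℂ) := by
  rw [trace_exp_hermitian hA]
  conv_lhs => rw [exp_hermitian hA]
  rw [← smul_mul_assoc, ← mul_smul_comm, ← Matrix.diagonal_smul]
  have h : ((((∑ i, Real.exp (hA.eigenvalues i) : ℝ)):ℂ))⁻¹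
        • (fun i => ((Real.exp (hA.eigenvalues i):ℝ):ℂ))
      = fun j => ((Real.exp (hA.eigenvalues j) / (∑ i, Real.exp (hA.eigenvalues i)) : ℝ):ℂ) := by
    funext j
    simp only [Pi.smul_apply, smul_eq_mul]
    push_cast
    rw [div_eq_inv_mul]
  rw [h]

section core

variable [Nonempty n]

/-- Klein / Gibbs variational inequality. -/
lemma klein {A : Matrix n n ℂ} (hA : A.IsHermitian) {ρ : Matrix n n ℂ}
    (hρ : IsDensityMatrix ρ) :
    ((ρ * A).trace.re + vnEntropy ρ ≤ Real.log ((NormedSpace.exp A).trace.re)) ∧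
    (ρ ≠ ((NormedSpace.exp A).trace)⁻¹ • NormedSpace.exp A →
      (ρ * A).trace.re + vnEntropy ρ < Real.log ((NormedSpace.exp A).trace.re)) := by
  classical
  have hH : ρ.IsHermitian := hρ.1.1
  set P : Matrix n n ℂ := (hH.eigenvectorUnitary : Matrix n n ℂ) with hPdef
  set W : Matrix n n ℂ := (hA.eigenvectorUnitary : Matrix n n ℂ) with hWdef
  set p : n → ℝ := hH.eigenvalues with hpdef
  set μ : n → ℝ := hA.eigenvalues with hμdef
  set Z : ℝ := ∑ i, Real.exp (μ i) with hZdef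
  have hZpos : 0 < Z := Finset.sum_pos (fun i _ => Real.exp_pos _) Finset.univ_nonempty
  set q : n → ℝ := fun j => Real.exp (μ j) / Z with hqdef
  have hq0 : ∀ j, 0 < q j := fun j => div_pos (Real.exp_pos _) hZpos
  have hp0 : ∀ i, 0 ≤ p i := fun i => hρ.1.eigenvalues_nonneg i
  set M : Matrix n n ℂ := star P * W with hMdef
  set c : n → n → ℝ := fun i j => Complex.normSq (M i j) with hcdef
  have hc0 : ∀ i j, 0 ≤ c i j := fun i j => Complex.normSq_nonneg _
  have hPs : P * star P = 1 := Unitary.mul_star_self_of_mem hH.eigenvectorUnitary.2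
  have hsP : star P * P = 1 := Unitary.star_mul_self_of_mem hH.eigenvectorUnitary.2
  have hWs : W * star W = 1 := Unitary.mul_star_self_of_mem hA.eigenvectorUnitary.2
  have hsW : star W * W = 1 := Unitary.star_mul_self_of_mem hA.eigenvectorUnitary.2
  have hstarM : star M = star W * P := by rw [hMdef, StarMul.star_mul, star_star]
  have hMs : M * star M = 1 := by
    rw [hMdef, hstarM, Matrix.mul_assoc, ← Matrix.mul_assoc W (star W) P, hWs,
      Matrix.one_mul, hsP]
  have hsM : star M * M = 1 := by
    rw [hstarM, hMdef, Matrix.mul_assoc, ← Matrix.mul_assoc P (star P) W, hPs,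
      Matrix.one_mul, hsW]
  -- rows of c sum to 1
  have hentry : ∀ i j, M i j * (star M) j i = ((c i j : ℝ) : ℂ) := by
    intro i j
    rw [Matrix.star_eq_conjTranspose, Matrix.conjTranspose_apply, hcdef]
    exact Complex.mul_conj _
  have hentry' : ∀ i j, (star M) j i * M i j = ((c i j : ℝ) : ℂ) := by
    intro i j
    rw [mul_comm]
    exact hentry i j
  have hrow : ∀ i, ∑ j, c i j = 1 := by
    intro i
    have h := congrArg (fun X : Matrix n n ℂ => X i i) hMs
    simp only [Matrix.mul_apply, Matrix.one_apply_eq] at h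
    have h2 : ∑ j, ((c i j : ℝ) : ℂ) = 1 := by
      rw [← h]
      exact Finset.sum_congr rfl fun j _ => (hentry i j).symm
    exact_mod_cast h2
  have hcol : ∀ j, ∑ i, c i j = 1 := by
    intro j
    have h := congrArg (fun X : Matrix n n ℂ => X j j) hsM
    simp only [Matrix.mul_apply, Matrix.one_apply_eq] at h
    have h2 : ∑ i, ((c i j : ℝ) : ℂ) = 1 := by
      rw [← h]
      exact Finset.sum_congr rfl fun i _ => (hentry' i j).symm
    exact_mod_cast h2
  -- spectral decompositions
  have hρspec : ρ = P * Matrix.diagonal (fun i => ((p i : ℝ) : ℂ)) * star P := by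
    conv_lhs => rw [hH.spectral_theorem]
    rfl
  have hAspec : A = W * Matrix.diagonal (fun j => ((μ j : ℝ) : ℂ)) * star W := by
    conv_lhs => rw [hA.spectral_theorem]
    rfl
  -- trace formula
  have hmulform : ρ * A = P * (Matrix.diagonal (fun i => ((p i : ℝ) : ℂ)) * M
      * Matrix.diagonal (fun j => ((μ j : ℝ) : ℂ)) * star M) * star P := by
    conv_lhs => rw [hρspec, hAspec]
    rw [hstarM, hMdef]
    simp only [Matrix.mul_assoc]
    rw [hPs]
    simp only [Matrix.mul_one]
  have htrace : (ρ * A).trace = ((∑ i, ∑ j, c i j * (p i * μ j) : ℝ) : ℂ) := by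
    rw [hmulform, trace_conj hsP]
    rw [Matrix.trace]
    have hdiag : ∀ i, (Matrix.diagonal (fun i => ((p i : ℝ) : ℂ)) * M
        * Matrix.diagonal (fun j => ((μ j : ℝ) : ℂ)) * star M).diag i
        = ∑ j, ((c i j * (p i * μ j) : ℝ) : ℂ) := by
      intro i
      rw [Matrix.diag_apply, Matrix.mul_apply]
      apply Finset.sum_congr rfl
      intro j _
      rw [Matrix.mul_diagonal, Matrix.diagonal_mul]
      have hz := hentry i j
      push_cast
      push_cast at hz
      linear_combination ((p i : ℂ)) * ((μ j : ℂ)) * hz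
    rw [Finset.sum_congr rfl fun i _ => hdiag i]
    push_cast
    rfl
  have htre : (ρ * A).trace.re = ∑ i, ∑ j, c i j * (p i * μ j) := by
    rw [htrace, Complex.ofReal_re]
  -- trace of rho
  have hsump : ∑ i, p i = 1 := by
    have h := hρ.2
    rw [hρspec, trace_conj hsP, Matrix.trace_diagonal] at h
    have h2 : ((∑ i, p i : ℝ) : ℂ) = 1 := by push_cast; exact h
    exact_mod_cast h2
  -- entropy
  have hent : vnEntropy ρ = -∑ i, p i * Real.log (p i) := by
    rw [vnEntropy, dif_pos hH]
  -- log Z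
  have hlogZ : Real.log ((NormedSpace.exp A).trace.re) = Real.log Z := by
    rw [trace_exp_hermitian hA, Complex.ofReal_re, hZdef, hμdef]
  have hlogq : ∀ j, Real.log (q j) = μ j - Real.log Z := by
    intro j
    rw [hqdef, Real.log_div (Real.exp_pos _).ne' hZpos.ne', Real.log_exp]
  have hsumq : ∑ j, q j = 1 := by
    rw [hqdef, ← Finset.sum_div, ← hZdef, div_self hZpos.ne']
  -- the master identity
  have hmain : ∑ i, ∑ j, c i j * (p i * Real.log (p i) - p i * Real.log (q j) - p i + q j)
      = Real.log Z - ((ρ * A).trace.re + vnEntropy ρ) := by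
    have hsplit : ∀ i j, c i j * (p i * Real.log (p i) - p i * Real.log (q j) - p i + q j)
        = c i j * (p i * Real.log (p i)) - c i j * (p i * μ j)
          + Real.log Z * (c i j * p i) - c i j * p i + c i j * q j := by
      intro i j; rw [hlogq j]; ring
    have S1 : ∑ i, ∑ j, c i j * (p i * Real.log (p i)) = ∑ i, p i * Real.log (p i) := by
      apply Finset.sum_congr rfl
      intro i _
      rw [← Finset.sum_mul, hrow i, one_mul]
    have S4 : ∑ i, ∑ j, c i j * p i = 1 := by
      rw [Finset.sum_congr rfl fun i (_ : i ∈ Finset.univ) =>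
        (by rw [← Finset.sum_mul, hrow i, one_mul] : ∑ j, c i j * p i = p i)]
      exact hsump
    have S3 : ∑ i, ∑ j, Real.log Z * (c i j * p i) = Real.log Z := by
      simp_rw [← Finset.mul_sum]
      rw [S4, mul_one]
    have S5 : ∑ i, ∑ j, c i j * q j = 1 := by
      rw [Finset.sum_comm]
      rw [Finset.sum_congr rfl fun j (_ : j ∈ Finset.univ) =>
        (by rw [← Finset.sum_mul, hcol j, one_mul] : ∑ i, c i j * q j = q j)]
      exact hsumq
    calc ∑ i, ∑ j, c i j * (p i * Real.log (p i) - p i * Real.log (q j) - p i + q j)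
        = ∑ i, ∑ j, (c i j * (p i * Real.log (p i)) - c i j * (p i * μ j)
          + Real.log Z * (c i j * p i) - c i j * p i + c i j * q j) := by
          exact Finset.sum_congr rfl fun i _ => Finset.sum_congr rfl fun j _ => hsplit i j
      _ = Real.log Z - ((ρ * A).trace.re + vnEntropy ρ) := by
          simp only [Finset.sum_add_distrib, Finset.sum_sub_distrib]
          rw [S1, S3, S4, S5, htre, hent]
          ring
  have hterm : ∀ i j, 0 ≤ c i j * (p i * Real.log (p i) - p i * Real.log (q j) - p i + q j) :=
    fun i j => mul_nonneg (hc0 i j) ((klein_pointwise (hp0 i) (hq0 j)).1)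
  have hRnonneg : 0 ≤ ∑ i, ∑ j, c i j
      * (p i * Real.log (p i) - p i * Real.log (q j) - p i + q j) :=
    Finset.sum_nonneg fun i _ => Finset.sum_nonneg fun j _ => hterm i j
  constructor
  · rw [hlogZ]
    linarith [hmain ▸ hRnonneg]
  · intro hne
    by_contra hcon
    push_neg at hcon
    rw [hlogZ] at hcon
    have hzero : ∑ i, ∑ j, c i j
        * (p i * Real.log (p i) - p i * Real.log (q j) - p i + q j) = 0 := by
      rw [hmain]; linarith
    rw [← Finset.sum_product'] at hzero
    have hall := (Finset.sum_eq_zero_iff_of_nonneg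
      (fun x _ => hterm x.1 x.2)).mp hzero
    have key : ∀ i j, (p i : ℂ) * M i j = M i j * (q j : ℂ) := by
      intro i j
      have h0 : c i j * (p i * Real.log (p i) - p i * Real.log (q j) - p i + q j) = 0 :=
        hall (i, j) (Finset.mem_univ _)
      rcases mul_eq_zero.mp h0 with hcz | hgz
      · have hMz : M i j = 0 := by
          have := Complex.normSq_eq_zero.mp hcz
          exact this
        rw [hMz, mul_zero, zero_mul]
      · have hpq : p i = q j := by
          by_contra hne2
          have := (klein_pointwise (hp0 i) (hq0 j)).2 hne2
          linarith
        rw [hpq, mul_comm]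
    apply hne
    have hDM : Matrix.diagonal (fun i => ((p i : ℝ) : ℂ)) * M
        = M * Matrix.diagonal (fun j => ((q j : ℝ) : ℂ)) := by
      ext i j
      rw [Matrix.diagonal_mul, Matrix.mul_diagonal]
      exact key i j
    have hMDq : M * Matrix.diagonal (fun j => ((q j : ℝ) : ℂ)) * star M
        = Matrix.diagonal (fun i => ((p i : ℝ) : ℂ)) := by
      rw [← hDM, Matrix.mul_assoc, hMs, Matrix.mul_one]
    have hWPM : P * M = W := by
      rw [hMdef, ← Matrix.mul_assoc, hPs, Matrix.one_mul]
    rw [normalized_exp_eq hA]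
    show ρ = W * Matrix.diagonal (fun j => ((q j : ℝ) : ℂ)) * star W
    conv_rhs => rw [← hWPM, StarMul.star_mul]
    rw [hρspec, ← hMDq]
    simp only [Matrix.mul_assoc]

/-- The normalized exponential is a density matrix. -/
lemma gibbs_isDensityMatrix {A : Matrix n n ℂ} (hA : A.IsHermitian) :
    IsDensityMatrix (((NormedSpace.exp A).trace)⁻¹ • NormedSpace.exp A) := by
  have hZpos : 0 < ∑ i, Real.exp (hA.eigenvalues i) :=
    Finset.sum_pos (fun i _ => Real.exp_pos _) Finset.univ_nonempty
  rw [normalized_exp_eq hA]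
  constructor
  · have hdiag : (Matrix.diagonal (fun j =>
        ((Real.exp (hA.eigenvalues j) / (∑ i, Real.exp (hA.eigenvalues i)) : ℝ) : ℂ))).PosSemidef := by
      rw [Matrix.posSemidef_diagonal_iff]
      intro j
      rw [Complex.zero_le_real]
      exact div_nonneg (Real.exp_pos _).le hZpos.le
    have := hdiag.mul_mul_conjTranspose_same (hA.eigenvectorUnitary : Matrix n n ℂ)
    simpa [Matrix.star_eq_conjTranspose] using this
  · rw [trace_conj (Unitary.star_mul_self_of_mem (hA.eigenvectorUnitary).2),
      Matrix.trace_diagonal]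
    rw [show ∀ g : n → ℝ, ∑ j, ((g j : ℝ) : ℂ) = ((∑ j, g j : ℝ) : ℂ) from
      fun g => by push_cast; rfl]
    rw [← Finset.sum_div, div_self hZpos.ne']
    norm_num

/-- Equality in the Gibbs variational principle at the Gibbs state. -/
lemma klein_eq {A : Matrix n n ℂ} (hA : A.IsHermitian) :
    ((((NormedSpace.exp A).trace)⁻¹ • NormedSpace.exp A) * A).trace.re
        + vnEntropy (((NormedSpace.exp A).trace)⁻¹ • NormedSpace.exp A)
      = Real.log ((NormedSpace.exp A).trace.re) := by
  have hZpos : 0 < ∑ i, Real.exp (hA.eigenvalues i) :=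
    Finset.sum_pos (fun i _ => Real.exp_pos _) Finset.univ_nonempty
  set W : Matrix n n ℂ := (hA.eigenvectorUnitary : Matrix n n ℂ) with hW
  have hsW : star W * W = 1 := Unitary.star_mul_self_of_mem (hA.eigenvectorUnitary).2
  set μ : n → ℝ := hA.eigenvalues with hμ
  set Z : ℝ := ∑ i, Real.exp (μ i) with hZ
  set q : n → ℝ := fun j => Real.exp (μ j) / Z with hq
  have hqpos : ∀ j, 0 < q j := fun j => div_pos (Real.exp_pos _) hZpos
  have hσ : ((NormedSpace.exp A).trace)⁻¹ • NormedSpace.exp A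
      = W * Matrix.diagonal (fun j => ((q j : ℝ) : ℂ)) * star W := normalized_exp_eq hA
  have hlogq : ∀ j, Real.log (q j) = μ j - Real.log Z := by
    intro j
    rw [hq, Real.log_div (Real.exp_pos _).ne' hZpos.ne', Real.log_exp]
  have hsumq : ∑ j, q j = 1 := by
    rw [hq, ← Finset.sum_div, ← hZ, div_self hZpos.ne']
  -- entropy term
  have hσdm : IsDensityMatrix (((NormedSpace.exp A).trace)⁻¹ • NormedSpace.exp A) :=
    gibbs_isDensityMatrix hA
  have hσherm : (((NormedSpace.exp A).trace)⁻¹ • NormedSpace.exp A).IsHermitian :=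
    hσdm.1.1
  have hent : vnEntropy (((NormedSpace.exp A).trace)⁻¹ • NormedSpace.exp A)
      = -∑ j, q j * Real.log (q j) := by
    rw [vnEntropy, dif_pos hσherm]
    have := sum_phi_eigenvalues (U := hA.eigenvectorUnitary) (f := q) hσherm hσ
      (fun x => x * Real.log x)
    rw [this]
  -- trace term
  have htrace : ((((NormedSpace.exp A).trace)⁻¹ • NormedSpace.exp A) * A).trace
      = ((∑ j, q j * μ j : ℝ) : ℂ) := by
    rw [hσ]
    conv_lhs => rw [hA.spectral_theorem, Unitary.conjStarAlgAut_apply]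
    have hassoc : (W * Matrix.diagonal (fun j => ((q j : ℝ) : ℂ)) * star W)
          * (W * Matrix.diagonal (RCLike.ofReal ∘ μ) * star W)
        = W * (Matrix.diagonal (fun j => ((q j : ℝ) : ℂ))
            * Matrix.diagonal (RCLike.ofReal ∘ μ)) * star W := by
      simp only [Matrix.mul_assoc]
      rw [← Matrix.mul_assoc (star W) W, hsW, Matrix.one_mul]
    rw [hassoc, Matrix.diagonal_mul_diagonal, trace_conj hsW, Matrix.trace_diagonal]
    push_cast
    rfl
  -- log Z term
  have hlogZ : Real.log ((NormedSpace.exp A).trace.re) = Real.log Z := by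
    rw [trace_exp_hermitian hA, Complex.ofReal_re, hZ, hμ]
  rw [hent, hlogZ]
  have : ((((NormedSpace.exp A).trace)⁻¹ • NormedSpace.exp A) * A).trace.re
      = ∑ j, q j * μ j := by rw [htrace, Complex.ofReal_re]
  rw [this]
  calc ∑ j, q j * μ j + -∑ j, q j * Real.log (q j)
      = ∑ j, (q j * μ j - q j * Real.log (q j)) := by rw [Finset.sum_sub_distrib]; ring
    _ = ∑ j, q j * Real.log Z := by
        apply Finset.sum_congr rfl
        intro j _
        rw [hlogq j]; ring
    _ = (∑ j, q j) * Real.log Z := by rw [Finset.sum_mul]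
    _ = Real.log Z := by rw [hsumq, one_mul]

end core

lemma trace_re_smul {n : Type*} [Fintype n] [DecidableEq n] (r : ℝ) (X : Matrix n n ℂ) :
    (((r : ℂ) • X).trace).re = r * X.trace.re := by
  rw [Matrix.trace_smul, smul_eq_mul, Complex.re_ofReal_mul]

lemma freeEnergy_eq {n : Type*} [Fintype n] [DecidableEq n] (β : ℝ) (K : Matrix n n ℂ) :
    freeEnergy β K = -β⁻¹ * Real.log ((NormedSpace.exp ((-β : ℂ) • K)).trace.re) := rfl

lemma gibbs_eq {n : Type*} [Fintype n] [DecidableEq n] (β : ℝ) (K : Matrix n n ℂ) :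
    gibbs β K = ((NormedSpace.exp ((-β : ℂ) • K)).trace)⁻¹
      • NormedSpace.exp ((-β : ℂ) • K) := rfl

lemma smul_hermitian {n : Type*} [Fintype n] [DecidableEq n] (r : ℝ)
    {v : Matrix n n ℂ} (hv : v.IsHermitian) : (r • v).IsHermitian := by
  have : (r • v)ᴴ = r • vᴴ := by
    ext i j
    simp [Matrix.conjTranspose_apply, Matrix.smul_apply, Complex.real_smul]
  rw [Matrix.IsHermitian, this, hv.eq]

lemma neg_beta_smul_hermitian {n : Type*} [Fintype n] [DecidableEq n] (β : ℝ)
    {K : Matrix n n ℂ} (hK : K.IsHermitian) : ((-β : ℂ) • K).IsHermitian := by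
  have : ((-β : ℂ) • K)ᴴ = (-β : ℂ) • Kᴴ := by
    ext i j
    simp [Matrix.conjTranspose_apply, Matrix.smul_apply, Complex.star_def, _root_.map_mul,
      Complex.conj_ofReal]
  rw [Matrix.IsHermitian, this, hK.eq]

end FEaux

/-- The function `v ↦ -β⁻¹ log Tr(e^{-β(H₀+V(v))})` is strictly concave on traceless Hermitian
potentials, assuming distinct traceless potentials give distinct Gibbs states. -/
theorem freeEnergy_strictConcave {d m : ℕ} (hd : 0 < d)
    (H₀ : Matrix (Fin d) (Fin d) ℂ) (hH₀ : H₀.IsHermitian) (β : ℝ) (hβ : 0 < β)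
    (V : Matrix (Fin m) (Fin m) ℂ →ₗ[ℝ] Matrix (Fin d) (Fin d) ℂ)
    (hVherm : ∀ v : Matrix (Fin m) (Fin m) ℂ, v.IsHermitian → (V v).IsHermitian)
    (hinj : ∀ v₁ v₂ : Matrix (Fin m) (Fin m) ℂ, v₁.IsHermitian → v₂.IsHermitian →
      v₁.trace = 0 → v₂.trace = 0 →
      gibbs β (H₀ + V v₁) = gibbs β (H₀ + V v₂) → v₁ = v₂)
    (v₁ v₂ : Matrix (Fin m) (Fin m) ℂ) (h₁ : v₁.IsHermitian) (h₂ : v₂.IsHermitian)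
    (htr₁ : v₁.trace = 0) (htr₂ : v₂.trace = 0) (hne : v₁ ≠ v₂)
    (t : ℝ) (ht : t ∈ Set.Ioo (0 : ℝ) 1) :
    t * freeEnergy β (H₀ + V v₁) + (1 - t) * freeEnergy β (H₀ + V v₂) <
      freeEnergy β (H₀ + V (t • v₁ + (1 - t) • v₂)) := by
  obtain ⟨ht0, ht1⟩ := ht
  haveI : Nonempty (Fin d) := ⟨⟨0, hd⟩⟩
  -- hermiticity and tracelessness of the interpolated potential
  have hvtherm : (t • v₁ + (1 - t) • v₂).IsHermitian :=
    (FEaux.smul_hermitian t h₁).add (FEaux.smul_hermitian (1 - t) h₂)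
  have hvttr : (t • v₁ + (1 - t) • v₂).trace = 0 := by
    rw [Matrix.trace_add, Matrix.trace_smul, Matrix.trace_smul, htr₁, htr₂, smul_zero,
      smul_zero, add_zero]
  have hK₁h : (H₀ + V v₁).IsHermitian := hH₀.add (hVherm v₁ h₁)
  have hK₂h : (H₀ + V v₂).IsHermitian := hH₀.add (hVherm v₂ h₂)
  have hKth : (H₀ + V (t • v₁ + (1 - t) • v₂)).IsHermitian :=
    hH₀.add (hVherm _ hvtherm)
  have hA₁h : ((-β : ℂ) • (H₀ + V v₁)).IsHermitian := FEaux.neg_beta_smul_hermitian β hK₁h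
  have hA₂h : ((-β : ℂ) • (H₀ + V v₂)).IsHermitian := FEaux.neg_beta_smul_hermitian β hK₂h
  have hAth : ((-β : ℂ) • (H₀ + V (t • v₁ + (1 - t) • v₂))).IsHermitian :=
    FEaux.neg_beta_smul_hermitian β hKth
  -- convex combination identity for the scaled Hamiltonians
  have hcomb : (-β : ℂ) • (H₀ + V (t • v₁ + (1 - t) • v₂))
      = ((t : ℝ) : ℂ) • ((-β : ℂ) • (H₀ + V v₁))
        + (((1 - t : ℝ)) : ℂ) • ((-β : ℂ) • (H₀ + V v₂)) := by
    rw [map_add, _root_.map_smul, _root_.map_smul]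
    ext i j
    simp only [Matrix.add_apply, Matrix.smul_apply, smul_eq_mul, Complex.real_smul]
    push_cast
    ring
  -- the Gibbs state of the interpolated Hamiltonian
  set ρ : Matrix (Fin d) (Fin d) ℂ :=
    gibbs β (H₀ + V (t • v₁ + (1 - t) • v₂)) with hρdef
  have hρeq : ρ = ((NormedSpace.exp ((-β : ℂ) • (H₀ + V (t • v₁ + (1 - t) • v₂)))).trace)⁻¹
      • NormedSpace.exp ((-β : ℂ) • (H₀ + V (t • v₁ + (1 - t) • v₂))) := rfl
  have hρdm : IsDensityMatrix ρ := by
    rw [hρeq]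
    exact FEaux.gibbs_isDensityMatrix hAth
  -- Klein inequalities at the two endpoints
  have hk₁ := FEaux.klein hA₁h hρdm
  have hk₂ := FEaux.klein hA₂h hρdm
  -- the Gibbs state cannot coincide with both endpoint Gibbs states
  have hstrict : ρ ≠ ((NormedSpace.exp ((-β : ℂ) • (H₀ + V v₁))).trace)⁻¹
        • NormedSpace.exp ((-β : ℂ) • (H₀ + V v₁))
      ∨ ρ ≠ ((NormedSpace.exp ((-β : ℂ) • (H₀ + V v₂))).trace)⁻¹
        • NormedSpace.exp ((-β : ℂ) • (H₀ + V v₂)) := by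
    by_contra hcon
    push_neg at hcon
    obtain ⟨he₁, he₂⟩ := hcon
    refine hne (hinj v₁ v₂ h₁ h₂ htr₁ htr₂ ?_)
    rw [FEaux.gibbs_eq, FEaux.gibbs_eq]
    exact he₁.symm.trans he₂
  -- equality at the interpolated Hamiltonian
  have heq := FEaux.klein_eq hAth
  rw [← hρeq] at heq
  -- linear decomposition of the trace
  have htrdec : (ρ * ((-β : ℂ) • (H₀ + V (t • v₁ + (1 - t) • v₂)))).trace.re
      = t * (ρ * ((-β : ℂ) • (H₀ + V v₁))).trace.re
        + (1 - t) * (ρ * ((-β : ℂ) • (H₀ + V v₂))).trace.re := by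
    have e : ρ * ((-β : ℂ) • (H₀ + V (t • v₁ + (1 - t) • v₂)))
        = ((t : ℝ) : ℂ) • (ρ * ((-β : ℂ) • (H₀ + V v₁)))
          + (((1 - t : ℝ)) : ℂ) • (ρ * ((-β : ℂ) • (H₀ + V v₂))) := by
      rw [hcomb, Matrix.mul_add,
        mul_smul_comm ((t : ℝ) : ℂ) ρ ((-β : ℂ) • (H₀ + V v₁)),
        mul_smul_comm (((1 - t : ℝ)) : ℂ) ρ ((-β : ℂ) • (H₀ + V v₂))]
    rw [e, Matrix.trace_add, Complex.add_re,
      FEaux.trace_re_smul t (ρ * ((-β : ℂ) • (H₀ + V v₁))),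
      FEaux.trace_re_smul (1 - t) (ρ * ((-β : ℂ) • (H₀ + V v₂)))]
  -- abbreviations
  set L₁ : ℝ := Real.log ((NormedSpace.exp ((-β : ℂ) • (H₀ + V v₁))).trace.re) with hL₁
  set L₂ : ℝ := Real.log ((NormedSpace.exp ((-β : ℂ) • (H₀ + V v₂))).trace.re) with hL₂
  set Lt : ℝ := Real.log
    ((NormedSpace.exp ((-β : ℂ) • (H₀ + V (t • v₁ + (1 - t) • v₂)))).trace.re) with hLt
  set G₁ : ℝ := (ρ * ((-β : ℂ) • (H₀ + V v₁))).trace.re + vnEntropy ρ with hG₁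
  set G₂ : ℝ := (ρ * ((-β : ℂ) • (H₀ + V v₂))).trace.re + vnEntropy ρ with hG₂
  have hLtdec : Lt = t * G₁ + (1 - t) * G₂ := by
    rw [← heq, htrdec, hG₁, hG₂]
    ring
  have hfinal : Lt < t * L₁ + (1 - t) * L₂ := by
    rcases hstrict with h | h
    · have hlt : G₁ < L₁ := hk₁.2 h
      have hle : G₂ ≤ L₂ := hk₂.1
      rw [hLtdec]
      have e1 : t * G₁ < t * L₁ := mul_lt_mul_of_pos_left hlt ht0
      have e2 : (1 - t) * G₂ ≤ (1 - t) * L₂ :=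
        mul_le_mul_of_nonneg_left hle (by linarith)
      linarith
    · have hlt : G₂ < L₂ := hk₂.2 h
      have hle : G₁ ≤ L₁ := hk₁.1
      rw [hLtdec]
      have e1 : (1 - t) * G₂ < (1 - t) * L₂ := mul_lt_mul_of_pos_left hlt (by linarith)
      have e2 : t * G₁ ≤ t * L₁ := mul_le_mul_of_nonneg_left hle ht0.le
      linarith
  have hβneg : -β⁻¹ < 0 := by
    have := inv_pos.mpr hβ
    linarith
  rw [FEaux.freeEnergy_eq, FEaux.freeEnergy_eq, FEaux.freeEnergy_eq, ← hL₁, ← hL₂, ← hLt]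
  calc t * (-β⁻¹ * L₁) + (1 - t) * (-β⁻¹ * L₂)
      = -β⁻¹ * (t * L₁ + (1 - t) * L₂) := by ring
    _ < -β⁻¹ * Lt := mul_lt_mul_of_neg_left hfinal hβneg
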